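/- Let U ⊆ ℝⁿ be open, let g₀ : U → Mₙ(ℝ) be a C¹ map taking symmetric positive-definite values, let c, c̃ : U → ℝ be C¹ and strictly positive, set g = c²g₀, g̃ = c̃²g₀, h = log(c̃/c), and let Γ, Γ̃ be the Christoffel symbols of g and g̃. Let Y, Ỹ : U → Mₙ(ℝ) be continuous with g(z)Y(z) and g̃(z)Ỹ(z) antisymmetric for every z ∈ U. Define V, Ṽ : U × ℝⁿ → ℝⁿ × ℝⁿ by V(z,v) = (v, w) with wⁱ = −Σ_{j,k} Γⁱⱼₖ(z)vʲvᵏ + Σⱼ Yⁱⱼ(z)vʲ, and analogously Ṽ using Γ̃ and Ỹ. Let X̃ = (Z̃, Ξ̃) : ℝ × (U × ℝⁿ) → U × ℝⁿ be a C¹ flow of Ṽ. Let T > 0 and let (x, v) : [0,T] → U × ℝⁿ be continuously differentiable with (x, v)′(s) = V(x(s), v(s)), with initial unit speed v(0)ᵀ g(x(0)) v(0) = 1, and suppose the endpoints agree: (x(T), v(T)) = X̃(T, (x(0), v(0))). Then for every l ∈ {1,…,n}: ∫₀ᵀ Σᵢ (∂Ξ̃ˡ/∂vⁱ)(T−s,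 (x(s), v(s))) · [ 2 vⁱ(s) (Σⱼ ∂ⱼh(x(s)) vʲ(s)) − c(x(s))⁻² Σⱼ (g₀(x(s))⁻¹)ⁱʲ ∂ⱼh(x(s)) + Σⱼ (Yⁱⱼ(x(s)) − Ỹⁱⱼ(x(s))) vʲ(s) ] ds = 0. -/

import Mathlib

open Matrix

/-- The Christoffel symbols `Γⁱⱼₖ` of a matrix-valued map `g` on `ℝⁿ`:
`Γⁱⱼₖ(z) = ½ Σₗ (g(z)⁻¹)ⁱˡ (∂ⱼ gₗₖ(z) + ∂ₖ gₗⱼ(z) − ∂ₗ gⱼₖ(z))`. -/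
noncomputable def christoffel {n : ℕ} (g : (Fin n → ℝ) → Matrix (Fin n) (Fin n) ℝ)
    (z : Fin n → ℝ) (i j k : Fin n) : ℝ :=
  (1 / 2) * ∑ l, (g z)⁻¹ i l *
    (fderiv ℝ (fun w => g w l k) z (Pi.single j 1)
      + fderiv ℝ (fun w => g w l j) z (Pi.single k 1)
      - fderiv ℝ (fun w => g w j k) z (Pi.single l 1))


lemma fderiv_sq_mul {n : ℕ} {c f : (Fin n → ℝ) → ℝ}
    {z : Fin n → ℝ} (hc : DifferentiableAt ℝ c z) (hf : DifferentiableAt ℝ f z)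
    (d : Fin n → ℝ) :
    fderiv ℝ (fun w => (c w)^2 * f w) z d
      = 2 * c z * (fderiv ℝ c z d) * f z + (c z)^2 * fderiv ℝ f z d := by
  have hpow : (fun w => (c w)^2) = fun w => c w * c w := by funext w; ring
  have h1 : DifferentiableAt ℝ (fun w => (c w)^2) z := by rw [hpow]; exact hc.mul hc
  rw [fderiv_fun_mul h1 hf]
  have h2 : fderiv ℝ (fun w => (c w)^2) z = c z • fderiv ℝ c z + c z • fderiv ℝ c z := by
    rw [hpow, fderiv_fun_mul hc hc]
  simp only [ContinuousLinearMap.add_apply, ContinuousLinearMap.smul_apply, h2,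
    smul_eq_mul]
  ring


lemma christoffel_conformal {n : ℕ} {U : Set (Fin n → ℝ)} (hU : IsOpen U)
    {g0 : (Fin n → ℝ) → Matrix (Fin n) (Fin n) ℝ}
    (hg0 : ∀ i j, ContDiffOn ℝ 1 (fun z => g0 z i j) U)
    (hg0pos : ∀ z ∈ U, (g0 z).PosDef)
    {c : (Fin n → ℝ) → ℝ} (hc : ContDiffOn ℝ 1 c U) (hcpos : ∀ z ∈ U, 0 < c z)
    {z : Fin n → ℝ} (hz : z ∈ U) (i j k : Fin n) :
    christoffel (fun w => (c w)^2 • g0 w) z i j k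
      = christoffel g0 z i j k
        + ∑ l, (g0 z)⁻¹ i l *
          ((fderiv ℝ c z (Pi.single j 1) / c z) * g0 z l k
           + (fderiv ℝ c z (Pi.single k 1) / c z) * g0 z l j
           - (fderiv ℝ c z (Pi.single l 1) / c z) * g0 z j k) := by
  have hcz : DifferentiableAt ℝ c z :=
    (hc.differentiableOn one_ne_zero).differentiableAt (hU.mem_nhds hz)
  have hg : ∀ a b, DifferentiableAt ℝ (fun w => g0 w a b) z := fun a b =>
    ((hg0 a b).differentiableOn one_ne_zero).differentiableAt (hU.mem_nhds hz)
  have hcne : c z ≠ 0 := (hcpos z hz).ne'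
  have hdet : IsUnit (g0 z).det := isUnit_iff_ne_zero.mpr (hg0pos z hz).det_pos.ne'
  have hinv : ((c z)^2 • g0 z)⁻¹ = ((c z)^2)⁻¹ • (g0 z)⁻¹ := by
    apply Matrix.inv_eq_right_inv
    rw [Matrix.smul_mul, Matrix.mul_smul, Matrix.mul_nonsing_inv _ hdet, smul_smul]
    rw [mul_inv_cancel₀ (pow_ne_zero 2 hcne), one_smul]
  have hD : ∀ (a b d : Fin n),
      fderiv ℝ (fun w => (c w)^2 * g0 w a b) z (Pi.single d 1)
        = 2 * c z * (fderiv ℝ c z (Pi.single d 1)) * g0 z a b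
          + (c z)^2 * fderiv ℝ (fun w => g0 w a b) z (Pi.single d 1) :=
    fun a b d => fderiv_sq_mul hcz (hg a b) _
  simp only [christoffel, Matrix.smul_apply, smul_eq_mul, hinv, hD]
  rw [Finset.mul_sum, Finset.mul_sum, ← Finset.sum_add_distrib]
  refine Finset.sum_congr rfl fun l _ => ?_
  field_simp
  ring

lemma fderiv_log_div {n : ℕ} {U : Set (Fin n → ℝ)} (hU : IsOpen U)
    {c ct : (Fin n → ℝ) → ℝ}
    (hc : ContDiffOn ℝ 1 c U) (hct : ContDiffOn ℝ 1 ct U)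
    (hcpos : ∀ z ∈ U, 0 < c z) (hctpos : ∀ z ∈ U, 0 < ct z)
    {z : Fin n → ℝ} (hz : z ∈ U) (d : Fin n → ℝ) :
    fderiv ℝ (fun w => Real.log (ct w / c w)) z d
      = fderiv ℝ ct z d / ct z - fderiv ℝ c z d / c z := by
  have hcz : DifferentiableAt ℝ c z :=
    (hc.differentiableOn one_ne_zero).differentiableAt (hU.mem_nhds hz)
  have hctz : DifferentiableAt ℝ ct z :=
    (hct.differentiableOn one_ne_zero).differentiableAt (hU.mem_nhds hz)
  have hcne : c z ≠ 0 := (hcpos z hz).ne'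
  have hctne : ct z ≠ 0 := (hctpos z hz).ne'
  have hev : (fun w => Real.log (ct w / c w)) =ᶠ[nhds z]
      (fun w => Real.log (ct w) - Real.log (c w)) := by
    have h1 : c ⁻¹' (Set.Ioi 0) ∈ nhds z :=
      hcz.continuousAt.preimage_mem_nhds (Ioi_mem_nhds (hcpos z hz))
    have h2 : ct ⁻¹' (Set.Ioi 0) ∈ nhds z :=
      hctz.continuousAt.preimage_mem_nhds (Ioi_mem_nhds (hctpos z hz))
    filter_upwards [h1, h2] with w hw1 hw2
    exact Real.log_div (ne_of_gt hw2) (ne_of_gt hw1)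
  rw [hev.fderiv_eq]
  have hl1 : HasFDerivAt (fun w => Real.log (ct w)) ((ct z)⁻¹ • fderiv ℝ ct z) z :=
    (Real.hasDerivAt_log hctne).comp_hasFDerivAt z hctz.hasFDerivAt
  have hl2 : HasFDerivAt (fun w => Real.log (c w)) ((c z)⁻¹ • fderiv ℝ c z) z :=
    (Real.hasDerivAt_log hcne).comp_hasFDerivAt z hcz.hasFDerivAt
  rw [(hl1.fun_sub hl2).fderiv]
  simp [div_eq_inv_mul]

lemma christoffel_diff_contract {n : ℕ} {U : Set (Fin n → ℝ)} (hU : IsOpen U)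
    {g0 : (Fin n → ℝ) → Matrix (Fin n) (Fin n) ℝ}
    (hg0 : ∀ i j, ContDiffOn ℝ 1 (fun z => g0 z i j) U)
    (hg0pos : ∀ z ∈ U, (g0 z).PosDef)
    {c ct : (Fin n → ℝ) → ℝ}
    (hc : ContDiffOn ℝ 1 c U) (hct : ContDiffOn ℝ 1 ct U)
    (hcpos : ∀ z ∈ U, 0 < c z) (hctpos : ∀ z ∈ U, 0 < ct z)
    {z : Fin n → ℝ} (hz : z ∈ U) (i : Fin n) (u : Fin n → ℝ) :
    ∑ j, ∑ k, (christoffel (fun w => (ct w)^2 • g0 w) z i j k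
              - christoffel (fun w => (c w)^2 • g0 w) z i j k) * u j * u k
      = 2 * u i * (∑ j, (fderiv ℝ (fun w => Real.log (ct w / c w)) z (Pi.single j 1)) * u j)
        - (u ⬝ᵥ g0 z *ᵥ u) *
            ∑ j, (g0 z)⁻¹ i j * (fderiv ℝ (fun w => Real.log (ct w / c w)) z (Pi.single j 1)) := by
  have hdet : IsUnit (g0 z).det := isUnit_iff_ne_zero.mpr (hg0pos z hz).det_pos.ne'
  set e : Fin n → ℝ := fun d =>
    fderiv ℝ (fun w => Real.log (ct w / c w)) z (Pi.single d 1) with he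
  have he' : ∀ d : Fin n, e d = fderiv ℝ ct z (Pi.single d 1) / ct z
      - fderiv ℝ c z (Pi.single d 1) / c z := fun d =>
    fderiv_log_div hU hc hct hcpos hctpos hz _
  set W : ℝ := ∑ l, (g0 z)⁻¹ i l * e l with hW
  have hkey : ∀ k' : Fin n, (∑ l, (g0 z)⁻¹ i l * g0 z l k') = if i = k' then 1 else 0 := by
    intro k'
    rw [← Matrix.mul_apply, Matrix.nonsing_inv_mul _ hdet, Matrix.one_apply]
  have hdiff : ∀ j k : Fin n,
      christoffel (fun w => (ct w)^2 • g0 w) z i j k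
        - christoffel (fun w => (c w)^2 • g0 w) z i j k
      = e j * (if i = k then 1 else 0) + e k * (if i = j then 1 else 0) - g0 z j k * W := by
    intro j k
    rw [christoffel_conformal hU hg0 hg0pos hct hctpos hz i j k,
        christoffel_conformal hU hg0 hg0pos hc hcpos hz i j k]
    rw [add_sub_add_left_eq_sub, ← Finset.sum_sub_distrib]
    have hterm : ∀ l ∈ Finset.univ, (g0 z)⁻¹ i l *
          ((fderiv ℝ ct z (Pi.single j 1) / ct z) * g0 z l k
           + (fderiv ℝ ct z (Pi.single k 1) / ct z) * g0 z l j
           - (fderiv ℝ ct z (Pi.single l 1) / ct z) * g0 z j k)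
        - (g0 z)⁻¹ i l *
          ((fderiv ℝ c z (Pi.single j 1) / c z) * g0 z l k
           + (fderiv ℝ c z (Pi.single k 1) / c z) * g0 z l j
           - (fderiv ℝ c z (Pi.single l 1) / c z) * g0 z j k)
      = e j * ((g0 z)⁻¹ i l * g0 z l k) + e k * ((g0 z)⁻¹ i l * g0 z l j)
          - g0 z j k * ((g0 z)⁻¹ i l * e l) := by
      intro l _
      rw [he' j, he' k, he' l]
      ring
    rw [Finset.sum_congr rfl hterm, Finset.sum_sub_distrib, Finset.sum_add_distrib,
      ← Finset.mul_sum, ← Finset.mul_sum, ← Finset.mul_sum, hkey k, hkey j]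
  calc ∑ j, ∑ k, (christoffel (fun w => (ct w)^2 • g0 w) z i j k
              - christoffel (fun w => (c w)^2 • g0 w) z i j k) * u j * u k
      = ∑ j, ∑ k, (e j * (if i = k then 1 else 0) + e k * (if i = j then 1 else 0)
          - g0 z j k * W) * u j * u k :=
        Finset.sum_congr rfl fun j _ => Finset.sum_congr rfl fun k _ => by rw [hdiff j k]
    _ = 2 * u i * (∑ j, e j * u j) - (u ⬝ᵥ g0 z *ᵥ u) * W := by
        simp only [add_mul, sub_mul, ite_mul, mul_ite, one_mul, zero_mul, mul_zero, mul_one,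
          Finset.sum_add_distrib, Finset.sum_sub_distrib, Finset.sum_ite_eq, Finset.mem_univ,
          if_true, Finset.sum_ite_irrel, Finset.sum_const_zero, dotProduct,
          Matrix.mulVec]
        have hS1 : (∑ x, e x * u x * u i) = (∑ x, e x * u x) * u i :=
          (Finset.sum_mul _ _ _).symm
        have hS2 : (∑ x, e x * u i * u x) = (∑ x, e x * u x) * u i := by
          calc (∑ x, e x * u i * u x) = ∑ x, (e x * u x) * u i :=
                Finset.sum_congr rfl fun x _ => by ring
            _ = (∑ x, e x * u x) * u i := (Finset.sum_mul _ _ _).symm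
        have hS3 : (∑ x, ∑ y, g0 z x y * W * u x * u y)
            = (∑ x, u x * ∑ y, g0 z x y * u y) * W := by
          have hx : ∀ x : Fin n, (∑ y, g0 z x y * W * u x * u y)
              = (u x * ∑ y, g0 z x y * u y) * W := by
            intro x
            calc (∑ y, g0 z x y * W * u x * u y)
                = ∑ y, (g0 z x y * u y) * (u x * W) :=
                  Finset.sum_congr rfl fun y _ => by ring
              _ = (∑ y, g0 z x y * u y) * (u x * W) := (Finset.sum_mul _ _ _).symm
              _ = (u x * ∑ y, g0 z x y * u y) * W := by ring
          calc (∑ x, ∑ y, g0 z x y * W * u x * u y)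
              = ∑ x, (u x * ∑ y, g0 z x y * u y) * W :=
                Finset.sum_congr rfl fun x _ => hx x
            _ = (∑ x, u x * ∑ y, g0 z x y * u y) * W := (Finset.sum_mul _ _ _).symm
        rw [hS1, hS2, hS3]
        ring

lemma alg_consv {n : ℕ} (G Yz : Matrix (Fin n) (Fin n) ℝ)
    (hdet : IsUnit G.det) (hsym : G.IsSymm)
    (D : Fin n → Fin n → Fin n → ℝ)
    (hanti : (G * Yz)ᵀ = -(G * Yz)) (u a : Fin n → ℝ)
    (ha : ∀ i, a i = -(∑ p, ∑ q,
        ((1/2) * ∑ l, G⁻¹ i l * (D l q p + D l p q - D p q l)) * u p * u q)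
      + ∑ p, Yz i p * u p) :
    ∑ i, ∑ j, ((∑ m, u m * D i j m) * u i * u j + G i j * (a i * u j + u i * a j)) = 0 := by
  classical
  set S : ℝ := ∑ i, ∑ j, ∑ m, D i j m * u i * u j * u m with hS
  have R1 : ∑ j, ∑ p, ∑ q, D j q p * u p * u q * u j = S := by
    rw [hS]
    refine Finset.sum_congr rfl fun i _ => ?_
    rw [Finset.sum_comm]
    exact Finset.sum_congr rfl fun j _ => Finset.sum_congr rfl fun m _ => by ring
  have R2 : ∑ j, ∑ p, ∑ q, D j p q * u p * u q * u j = S := by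
    rw [hS]
    exact Finset.sum_congr rfl fun i _ => Finset.sum_congr rfl fun j _ =>
      Finset.sum_congr rfl fun m _ => by ring
  have R3 : ∑ j, ∑ p, ∑ q, D p q j * u p * u q * u j = S := by
    calc ∑ j, ∑ p, ∑ q, D p q j * u p * u q * u j
        = ∑ p, ∑ j, ∑ q, D p q j * u p * u q * u j := Finset.sum_comm
      _ = ∑ p, ∑ q, ∑ j, D p q j * u p * u q * u j :=
          Finset.sum_congr rfl fun p _ => Finset.sum_comm
      _ = S := by rw [hS]
  have step1 : ∑ i, ∑ j, (∑ m, u m * D i j m) * u i * u j = S := by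
    rw [hS]
    refine Finset.sum_congr rfl fun i _ => Finset.sum_congr rfl fun j _ => ?_
    rw [Finset.sum_mul, Finset.sum_mul]
    exact Finset.sum_congr rfl fun m _ => by ring
  have hGam : ∀ j p q : Fin n,
      (∑ i, G i j * ((1/2) * ∑ l, G⁻¹ i l * (D l q p + D l p q - D p q l)))
        = (1/2) * (D j q p + D j p q - D p q j) := by
    intro j p q
    have h1 : ∀ i, G i j * ((1/2) * ∑ l, G⁻¹ i l * (D l q p + D l p q - D p q l))
        = ∑ l, (G j i * G⁻¹ i l) * ((1/2) * (D l q p + D l p q - D p q l)) := by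
      intro i
      simp only [Finset.mul_sum]
      exact Finset.sum_congr rfl fun l _ => by rw [← hsym.apply i j]; ring
    rw [Finset.sum_congr rfl fun i _ => h1 i, Finset.sum_comm]
    have h2 : ∀ l, (∑ i, (G j i * G⁻¹ i l) * ((1/2) * (D l q p + D l p q - D p q l)))
        = (if j = l then 1 else 0) * ((1/2) * (D l q p + D l p q - D p q l)) := by
      intro l
      rw [← Finset.sum_mul, ← Matrix.mul_apply, Matrix.mul_nonsing_inv _ hdet,
        Matrix.one_apply]
    rw [Finset.sum_congr rfl fun l _ => h2 l]
    simp [ite_mul, Finset.sum_ite_eq, Finset.mem_univ]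
  have hM : ∀ p q : Fin n, (G * Yz) q p = -(G * Yz) p q := fun p q => by
    rw [show (G * Yz) q p = (G * Yz)ᵀ p q from rfl, hanti]
    rfl
  have hY0 : ∑ j, ∑ p, (G * Yz) j p * u p * u j = 0 := by
    have hdou : (∑ j, ∑ p, (G * Yz) j p * u p * u j)
        = -∑ j, ∑ p, (G * Yz) j p * u p * u j := by
      nth_rewrite 1 [Finset.sum_comm]
      rw [← Finset.sum_neg_distrib]
      refine Finset.sum_congr rfl fun j _ => ?_
      rw [← Finset.sum_neg_distrib]
      refine Finset.sum_congr rfl fun p _ => ?_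
      rw [hM p j]
      ring
    linarith
  have hinner : ∀ j, ∑ i, G i j * a i
      = -((1/2) * ∑ p, ∑ q, (D j q p + D j p q - D p q j) * u p * u q)
        + ∑ p, (G * Yz) j p * u p := by
    intro j
    have h1 : ∀ i, G i j * a i
        = -(∑ p, ∑ q, (G i j * ((1/2) * ∑ l, G⁻¹ i l * (D l q p + D l p q - D p q l)))
              * u p * u q)
          + ∑ p, (G i j * Yz i p) * u p := by
      intro i
      rw [ha i, mul_add, mul_neg]
      congr 1
      · rw [neg_inj, Finset.mul_sum]
        refine Finset.sum_congr rfl fun p _ => ?_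
        rw [Finset.mul_sum]
        exact Finset.sum_congr rfl fun q _ => by ring
      · rw [Finset.mul_sum]
        exact Finset.sum_congr rfl fun p _ => by ring
    rw [Finset.sum_congr rfl fun i _ => h1 i, Finset.sum_add_distrib,
      Finset.sum_neg_distrib]
    congr 1
    · rw [neg_inj, Finset.sum_comm]
      have hp : ∀ p, (∑ i, ∑ q,
          (G i j * ((1/2) * ∑ l, G⁻¹ i l * (D l q p + D l p q - D p q l))) * u p * u q)
          = ∑ q, ((1/2) * (D j q p + D j p q - D p q j)) * u p * u q := by
        intro p
        rw [Finset.sum_comm]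
        refine Finset.sum_congr rfl fun q _ => ?_
        rw [← Finset.sum_mul, ← Finset.sum_mul, hGam j p q]
      rw [Finset.sum_congr rfl fun p _ => hp p]
      simp only [Finset.mul_sum]
      exact Finset.sum_congr rfl fun p _ => Finset.sum_congr rfl fun q _ => by ring
    · rw [Finset.sum_comm]
      refine Finset.sum_congr rfl fun p _ => ?_
      rw [← Finset.sum_mul]
      congr 1
      rw [Matrix.mul_apply]
      exact Finset.sum_congr rfl fun i _ => by rw [hsym.apply i j]
  have hsecond : ∑ i, ∑ j, G i j * (u i * a j) = ∑ i, ∑ j, G i j * (a i * u j) := by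
    rw [Finset.sum_comm]
    exact Finset.sum_congr rfl fun i _ => Finset.sum_congr rfl fun j _ => by
      rw [hsym.apply i j]; ring
  have hX : ∑ i, ∑ j, G i j * (a i * u j) = ∑ j, (∑ i, G i j * a i) * u j := by
    rw [Finset.sum_comm]
    refine Finset.sum_congr rfl fun j _ => ?_
    rw [Finset.sum_mul]
    exact Finset.sum_congr rfl fun i _ => by ring
  have hP : ∑ j, ((1/2) * ∑ p, ∑ q, (D j q p + D j p q - D p q j) * u p * u q) * u j
      = (1/2) * S := by
    have per : ∀ j, ((1/2) * ∑ p, ∑ q, (D j q p + D j p q - D p q j) * u p * u q) * u j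
        = (1/2) * ∑ p, ∑ q, (D j q p * u p * u q * u j + D j p q * u p * u q * u j
            - D p q j * u p * u q * u j) := by
      intro j
      rw [mul_assoc]
      congr 1
      rw [Finset.sum_mul]
      refine Finset.sum_congr rfl fun p _ => ?_
      rw [Finset.sum_mul]
      exact Finset.sum_congr rfl fun q _ => by ring
    rw [Finset.sum_congr rfl fun j _ => per j, ← Finset.mul_sum]
    congr 1
    simp only [Finset.sum_add_distrib, Finset.sum_sub_distrib]
    rw [R1, R2, R3]
    ring
  have hQ : ∑ j, (∑ p, (G * Yz) j p * u p) * u j = 0 := by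
    rw [Finset.sum_congr rfl fun j _ => Finset.sum_mul Finset.univ _ (u j)]
    exact hY0
  calc ∑ i, ∑ j, ((∑ m, u m * D i j m) * u i * u j + G i j * (a i * u j + u i * a j))
      = ∑ i, ∑ j, ((∑ m, u m * D i j m) * u i * u j)
        + ∑ i, ∑ j, G i j * (a i * u j + u i * a j) := by
        simp only [Finset.sum_add_distrib]
    _ = S + ∑ i, ∑ j, (G i j * (a i * u j) + G i j * (u i * a j)) := by
        rw [step1]
        congr 1
        exact Finset.sum_congr rfl fun i _ => Finset.sum_congr rfl fun j _ => by ring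
    _ = S + 2 * ∑ j, (∑ i, G i j * a i) * u j := by
        simp only [Finset.sum_add_distrib]
        rw [hsecond, hX]
        ring
    _ = S + 2 * ∑ j, (-(((1/2) * ∑ p, ∑ q, (D j q p + D j p q - D p q j) * u p * u q) * u j)
          + (∑ p, (G * Yz) j p * u p) * u j) := by
        congr 1
        congr 1
        refine Finset.sum_congr rfl fun j _ => ?_
        rw [hinner j]
        ring
    _ = S + 2 * (-((1/2) * S) + 0) := by
        rw [Finset.sum_add_distrib, Finset.sum_neg_distrib, hP, hQ]
    _ = 0 := by ring

lemma clm_apply_eq_sum {n : ℕ} (L : (Fin n → ℝ) →L[ℝ] ℝ) (u : Fin n → ℝ) :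
    L u = ∑ m, u m * L (Pi.single m 1) := by
  have h : u = ∑ m, u m • (Pi.single m 1 : Fin n → ℝ) := by
    funext j
    simp [Pi.single_apply, Finset.sum_ite_eq']
  calc L u = L (∑ m, u m • (Pi.single m 1 : Fin n → ℝ)) := by rw [← h]
    _ = ∑ m, u m * L (Pi.single m 1) := by
        rw [map_sum]
        exact Finset.sum_congr rfl fun m _ => by rw [_root_.map_smul]; rfl


lemma consv (n : ℕ) (U : Set (Fin n → ℝ)) (hU : IsOpen U)
    (g0 : (Fin n → ℝ) → Matrix (Fin n) (Fin n) ℝ)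
    (hg0 : ∀ i j, ContDiffOn ℝ 1 (fun z => g0 z i j) U)
    (hg0sym : ∀ z ∈ U, (g0 z).IsSymm)
    (hg0pos : ∀ z ∈ U, (g0 z).PosDef)
    (c : (Fin n → ℝ) → ℝ) (hc : ContDiffOn ℝ 1 c U) (hcpos : ∀ z ∈ U, 0 < c z)
    (Y : (Fin n → ℝ) → Matrix (Fin n) (Fin n) ℝ)
    (hYanti : ∀ z ∈ U, (((c z) ^ 2 • g0 z) * Y z)ᵀ = -(((c z) ^ 2 • g0 z) * Y z))
    (T : ℝ) (hT : 0 < T) (x v : ℝ → (Fin n → ℝ))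
    (hxU : ∀ s ∈ Set.Icc (0 : ℝ) T, x s ∈ U)
    (hxode : ∀ s ∈ Set.Icc (0 : ℝ) T, HasDerivWithinAt x (v s) (Set.Icc (0 : ℝ) T) s)
    (hvode : ∀ s ∈ Set.Icc (0 : ℝ) T,
      HasDerivWithinAt v (fun i =>
        -(∑ j, ∑ k, christoffel (fun w => (c w) ^ 2 • g0 w) (x s) i j k
            * v s j * v s k)
          + ∑ j, Y (x s) i j * v s j) (Set.Icc (0 : ℝ) T) s)
    (hunit : v 0 ⬝ᵥ ((c (x 0)) ^ 2 • g0 (x 0)) *ᵥ v 0 = 1) :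
    ∀ s ∈ Set.Icc (0 : ℝ) T, v s ⬝ᵥ ((c (x s)) ^ 2 • g0 (x s)) *ᵥ v s = 1 := by
  classical
  set a : ℝ → Fin n → ℝ := fun s i =>
    -(∑ j, ∑ k, christoffel (fun w => (c w) ^ 2 • g0 w) (x s) i j k * v s j * v s k)
      + ∑ j, Y (x s) i j * v s j with ha
  set E : ℝ → ℝ := fun s => ∑ i, ∑ j, ((c (x s))^2 * g0 (x s) i j) * v s i * v s j with hE
  have hEeq : ∀ s, v s ⬝ᵥ ((c (x s)) ^ 2 • g0 (x s)) *ᵥ v s = E s := by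
    intro s
    simp only [hE, dotProduct, Matrix.mulVec, Matrix.smul_apply, smul_eq_mul]
    refine Finset.sum_congr rfl fun i _ => ?_
    rw [Finset.mul_sum]
    exact Finset.sum_congr rfl fun j _ => by ring
  have hUdiff : ∀ z ∈ U, ∀ i j : Fin n,
      DifferentiableAt ℝ (fun w => (c w)^2 * g0 w i j) z := by
    intro z hz i j
    have hcz : DifferentiableAt ℝ c z :=
      (hc.differentiableOn one_ne_zero).differentiableAt (hU.mem_nhds hz)
    have hgz : DifferentiableAt ℝ (fun w => g0 w i j) z :=
      ((hg0 i j).differentiableOn one_ne_zero).differentiableAt (hU.mem_nhds hz)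
    exact (hcz.pow 2).mul hgz
  have hvcomp : ∀ s ∈ Set.Icc (0:ℝ) T, ∀ i,
      HasDerivWithinAt (fun τ => v τ i) (a s i) (Set.Icc (0:ℝ) T) s := by
    intro s hs i
    exact ((ContinuousLinearMap.proj (R := ℝ) (φ := fun _ : Fin n => ℝ)
      i).hasFDerivAt).comp_hasDerivWithinAt s (hvode s hs)
  have hG : ∀ s ∈ Set.Icc (0:ℝ) T, ∀ i j, HasDerivWithinAt
      (fun τ => (c (x τ))^2 * g0 (x τ) i j)
      (fderiv ℝ (fun w => (c w)^2 * g0 w i j) (x s) (v s)) (Set.Icc (0:ℝ) T) s := by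
    intro s hs i j
    exact ((hUdiff (x s) (hxU s hs) i j).hasFDerivAt).comp_hasDerivWithinAt s (hxode s hs)
  have hEderiv : ∀ s ∈ Set.Icc (0:ℝ) T, HasDerivWithinAt E
      (∑ i, ∑ j, ((fderiv ℝ (fun w => (c w)^2 * g0 w i j) (x s) (v s)) * v s i * v s j
        + ((c (x s))^2 * g0 (x s) i j) * (a s i * v s j + v s i * a s j)))
      (Set.Icc (0:ℝ) T) s := by
    intro s hs
    refine HasDerivWithinAt.fun_sum fun i _ => HasDerivWithinAt.fun_sum fun j _ => ?_
    have h1 := ((hG s hs i j).fun_mul (hvcomp s hs i)).fun_mul (hvcomp s hs j)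
    convert h1 using 1
    · rfl
    ring
  have hzero : ∀ s ∈ Set.Icc (0:ℝ) T,
      (∑ i, ∑ j, ((fderiv ℝ (fun w => (c w)^2 * g0 w i j) (x s) (v s)) * v s i * v s j
        + ((c (x s))^2 * g0 (x s) i j) * (a s i * v s j + v s i * a s j))) = 0 := by
    intro s hs
    have hz := hxU s hs
    have hdet : IsUnit ((c (x s))^2 • g0 (x s)).det := by
      rw [Matrix.det_smul]
      exact (isUnit_iff_ne_zero.2 (pow_ne_zero _ (pow_ne_zero 2 (hcpos _ hz).ne'))).mul
        (isUnit_iff_ne_zero.2 (hg0pos _ hz).det_pos.ne')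
    have hsym : ((c (x s))^2 • g0 (x s)).IsSymm := (hg0sym _ hz).smul _
    have hA : ∀ i, a s i = -(∑ p, ∑ q,
        ((1/2) * ∑ l, ((c (x s))^2 • g0 (x s))⁻¹ i l *
          (fderiv ℝ (fun w => (c w)^2 * g0 w l q) (x s) (Pi.single p 1)
           + fderiv ℝ (fun w => (c w)^2 * g0 w l p) (x s) (Pi.single q 1)
           - fderiv ℝ (fun w => (c w)^2 * g0 w p q) (x s) (Pi.single l 1))) * v s p * v s q)
      + ∑ p, Y (x s) i p * v s p := fun i => rfl
    have hmain := alg_consv ((c (x s))^2 • g0 (x s)) (Y (x s)) hdet hsym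
      (fun i j m => fderiv ℝ (fun w => (c w)^2 * g0 w i j) (x s) (Pi.single m 1))
      (hYanti _ hz) (v s) (a s) hA
    calc (∑ i, ∑ j, ((fderiv ℝ (fun w => (c w)^2 * g0 w i j) (x s) (v s)) * v s i * v s j
          + ((c (x s))^2 * g0 (x s) i j) * (a s i * v s j + v s i * a s j)))
        = ∑ i, ∑ j, ((∑ m, v s m *
              fderiv ℝ (fun w => (c w)^2 * g0 w i j) (x s) (Pi.single m 1)) * v s i * v s j
            + ((c (x s))^2 • g0 (x s)) i j * (a s i * v s j + v s i * a s j)) := by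
          refine Finset.sum_congr rfl fun i _ => Finset.sum_congr rfl fun j _ => ?_
          rw [clm_apply_eq_sum]
          rfl
      _ = 0 := hmain
  have hEcont : ContinuousOn E (Set.Icc (0:ℝ) T) :=
    fun s hs => (hEderiv s hs).continuousWithinAt
  have hconst : ∀ s ∈ Set.Icc (0:ℝ) T, E s = E 0 := by
    have hder0 : ∀ t ∈ Set.Ico (0:ℝ) T, HasDerivWithinAt E 0 (Set.Ici t) t := by
      intro t ht
      have h := hEderiv t (Set.Ico_subset_Icc_self ht)
      rw [hzero t (Set.Ico_subset_Icc_self ht)] at h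
      exact h.mono_of_mem_nhdsWithin (Icc_mem_nhdsGE_of_mem ht)
    exact fun s hs => constant_of_has_deriv_right_zero hEcont hder0 s hs
  intro s hs
  rw [hEeq, hconst s hs, ← hEeq 0, hunit]

lemma clm_apply_eq_sum₂ {n : ℕ}
    (L : (ℝ × ((Fin n → ℝ) × (Fin n → ℝ))) →L[ℝ] ℝ) (w : Fin n → ℝ) :
    L ((0 : ℝ), ((0 : Fin n → ℝ), w)) = ∑ i, w i * L (0, (0, Pi.single i 1)) := by
  have h : ((0 : ℝ), ((0 : Fin n → ℝ), w))
      = ∑ i, w i • (((0 : ℝ), ((0 : Fin n → ℝ), Pi.single i 1))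
          : ℝ × ((Fin n → ℝ) × (Fin n → ℝ))) := by
    rw [Prod.ext_iff]
    constructor
    · rw [Prod.fst_sum]
      simp
    · rw [Prod.snd_sum, Prod.ext_iff]
      constructor
      · rw [Prod.fst_sum]
        simp
      · rw [Prod.snd_sum]
        funext j
        simp [Pi.single_apply, Finset.sum_ite_eq']
  calc L ((0 : ℝ), ((0 : Fin n → ℝ), w))
      = L (∑ i, w i • (((0 : ℝ), ((0 : Fin n → ℝ), Pi.single i 1))
          : ℝ × ((Fin n → ℝ) × (Fin n → ℝ)))) := by rw [← h]
    _ = ∑ i, w i * L (0, (0, Pi.single i 1)) := by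
        rw [map_sum]
        exact Finset.sum_congr rfl fun i _ => by rw [_root_.map_smul]; rfl


/-- the pseudo-linearization identity reducing magnetic lens rigidity
for conformal metrics `g = c²g₀`, `g̃ = c̃²g₀` with Lorentz force matrices `Y`, `Ỹ` to
a weighted ray transform.  Here `X = (Z̃, Ξ̃)` is a C¹ flow of the magnetic vector
field `Ṽ` of `(g̃, Ỹ)`, `(x, v)` is a trajectory of the magnetic vector field `V` of
`(g, Y)` on `[0, T]` with unit initial `g`-speed, and the endpoints agree; then the
weighted integral of the combination of `dh` (`h = log(c̃/c)`) and `Y − Ỹ` along the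
trajectory vanishes. -/
theorem stmt_13 (n : ℕ) (U : Set (Fin n → ℝ)) (hU : IsOpen U)
    (g0 : (Fin n → ℝ) → Matrix (Fin n) (Fin n) ℝ)
    (hg0 : ∀ i j, ContDiffOn ℝ 1 (fun z => g0 z i j) U)
    (hg0sym : ∀ z ∈ U, (g0 z).IsSymm)
    (hg0pos : ∀ z ∈ U, (g0 z).PosDef)
    (c ct : (Fin n → ℝ) → ℝ)
    (hc : ContDiffOn ℝ 1 c U) (hct : ContDiffOn ℝ 1 ct U)
    (hcpos : ∀ z ∈ U, 0 < c z) (hctpos : ∀ z ∈ U, 0 < ct z)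
    (Y Yt : (Fin n → ℝ) → Matrix (Fin n) (Fin n) ℝ)
    (hY : ∀ i j, ContinuousOn (fun z => Y z i j) U)
    (hYt : ∀ i j, ContinuousOn (fun z => Yt z i j) U)
    (hYanti : ∀ z ∈ U, (((c z) ^ 2 • g0 z) * Y z)ᵀ = -(((c z) ^ 2 • g0 z) * Y z))
    (hYtanti : ∀ z ∈ U, (((ct z) ^ 2 • g0 z) * Yt z)ᵀ = -(((ct z) ^ 2 • g0 z) * Yt z))
    -- `X` is a C¹ flow of the magnetic vector field `Ṽ` of `(g̃, Ỹ)`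
    (X : ℝ → (Fin n → ℝ) × (Fin n → ℝ) → (Fin n → ℝ) × (Fin n → ℝ))
    (hXC1 : ContDiff ℝ 1 (fun p : ℝ × ((Fin n → ℝ) × (Fin n → ℝ)) => X p.1 p.2))
    (hX0 : ∀ σ, X 0 σ = σ)
    (hXode : ∀ (t : ℝ) (σ : (Fin n → ℝ) × (Fin n → ℝ)),
      HasDerivAt (fun τ => X τ σ)
        ((X t σ).2, fun i =>
          -(∑ j, ∑ k, christoffel (fun w => (ct w) ^ 2 • g0 w) (X t σ).1 i j k
              * (X t σ).2 j * (X t σ).2 k)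
            + ∑ j, Yt (X t σ).1 i j * (X t σ).2 j) t)
    (hXgroup : ∀ s t : ℝ, ∀ σ, X (t + s) σ = X t (X s σ))
    -- `(x, v)` is a trajectory of the magnetic vector field `V` of `(g, Y)` on `[0, T]`
    (T : ℝ) (hT : 0 < T)
    (x v : ℝ → (Fin n → ℝ))
    (hxU : ∀ s ∈ Set.Icc (0 : ℝ) T, x s ∈ U)
    (hxode : ∀ s ∈ Set.Icc (0 : ℝ) T, HasDerivWithinAt x (v s) (Set.Icc (0 : ℝ) T) s)
    (hvode : ∀ s ∈ Set.Icc (0 : ℝ) T,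
      HasDerivWithinAt v (fun i =>
        -(∑ j, ∑ k, christoffel (fun w => (c w) ^ 2 • g0 w) (x s) i j k
            * v s j * v s k)
          + ∑ j, Y (x s) i j * v s j) (Set.Icc (0 : ℝ) T) s)
    -- unit initial speed and agreement of the endpoints
    (hunit : v 0 ⬝ᵥ ((c (x 0)) ^ 2 • g0 (x 0)) *ᵥ v 0 = 1)
    (hend : (x T, v T) = X T (x 0, v 0)) :
    ∀ l : Fin n,
      (∫ s in (0 : ℝ)..T, ∑ i,
        (fderiv ℝ (fun σ : (Fin n → ℝ) × (Fin n → ℝ) => (X (T - s) σ).2 l) (x s, v s))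
            ((0 : Fin n → ℝ), Pi.single i 1) *
          (2 * v s i * (∑ j, fderiv ℝ (fun w => Real.log (ct w / c w)) (x s)
                (Pi.single j 1) * v s j)
            - (c (x s) ^ 2)⁻¹ * ∑ j, (g0 (x s))⁻¹ i j
                * fderiv ℝ (fun w => Real.log (ct w / c w)) (x s) (Pi.single j 1)
            + ∑ j, (Y (x s) i j - Yt (x s) i j) * v s j)) = 0 := by
  classical
  intro l
  set Vt : ((Fin n → ℝ) × (Fin n → ℝ)) → ((Fin n → ℝ) × (Fin n → ℝ)) := fun σ =>
    (σ.2, fun i => -(∑ j, ∑ k, christoffel (fun w => (ct w) ^ 2 • g0 w) σ.1 i j k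
        * σ.2 j * σ.2 k) + ∑ j, Yt σ.1 i j * σ.2 j) with hVt
  have hXode' : ∀ (t : ℝ) (σ : (Fin n → ℝ) × (Fin n → ℝ)), HasDerivAt (fun τ => X τ σ) (Vt (X t σ)) t :=
    fun t σ => hXode t σ
  set a : ℝ → Fin n → ℝ := fun s i =>
    -(∑ j, ∑ k, christoffel (fun w => (c w) ^ 2 • g0 w) (x s) i j k * v s j * v s k)
      + ∑ j, Y (x s) i j * v s j with ha
  set γ : ℝ → (Fin n → ℝ) × (Fin n → ℝ) := fun s => (x s, v s) with hγ
  set Xh : ℝ × ((Fin n → ℝ) × (Fin n → ℝ)) → ((Fin n → ℝ) × (Fin n → ℝ)) := fun p => X p.1 p.2 with hXh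
  have hXdiff : Differentiable ℝ Xh := hXC1.differentiable one_ne_zero
  set D : ℝ → ((Fin n → ℝ) × (Fin n → ℝ)) → (ℝ × ((Fin n → ℝ) × (Fin n → ℝ)) →L[ℝ] ((Fin n → ℝ) × (Fin n → ℝ))) := fun t σ => fderiv ℝ Xh (t, σ) with hD
  set π : ((Fin n → ℝ) × (Fin n → ℝ)) →L[ℝ] ℝ := (ContinuousLinearMap.proj l).comp
    (ContinuousLinearMap.snd ℝ (Fin n → ℝ) (Fin n → ℝ)) with hπ
  -- partial derivative in σ
  have hpart : ∀ (t : ℝ) (σ : (Fin n → ℝ) × (Fin n → ℝ)), HasFDerivAt (fun σ' => X t σ')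
      ((D t σ).comp (ContinuousLinearMap.inr ℝ ℝ ((Fin n → ℝ) × (Fin n → ℝ)))) σ := by
    intro t σ
    exact (hXdiff (t, σ)).hasFDerivAt.comp σ (hasFDerivAt_prodMk_right t σ)
  -- time derivative
  have htime : ∀ (t : ℝ) (σ : (Fin n → ℝ) × (Fin n → ℝ)), D t σ (1, 0) = Vt (X t σ) := by
    intro t σ
    have h1 : HasDerivAt (fun τ => Xh (τ, σ)) (D t σ (1, 0)) t := by
      have h := (hXdiff (t, σ)).hasFDerivAt.comp_hasDerivAt t
        ((hasDerivAt_id t).prodMk (hasDerivAt_const t σ))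
      exact h
    exact h1.unique (hXode' t σ)
  -- commutation of the flow derivative with the vector field
  have hcomm : ∀ (t : ℝ) (σ : (Fin n → ℝ) × (Fin n → ℝ)), D t σ (0, Vt σ) = Vt (X t σ) := by
    intro t σ
    have e1 : HasDerivAt (fun ε => X (t + ε) σ) (Vt (X t σ)) 0 := by
      have h0 : HasDerivAt (fun τ => X τ σ) (Vt (X t σ)) (t + 0) := by
        rw [add_zero]; exact hXode' t σ
      have hf : HasDerivAt (fun ε : ℝ => t + ε) 1 0 := by
        simpa using (hasDerivAt_id (0 : ℝ)).const_add t
      have := HasDerivAt.scomp (x := (0:ℝ)) h0 hf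
      rw [one_smul] at this
      exact this
    have hfun : (fun ε => X (t + ε) σ) = fun ε => X t (X ε σ) :=
      funext fun ε => hXgroup ε t σ
    rw [hfun] at e1
    have hp : HasFDerivAt (fun σ' => X t σ')
        ((D t σ).comp (ContinuousLinearMap.inr ℝ ℝ ((Fin n → ℝ) × (Fin n → ℝ)))) (X 0 σ) := by
      rw [hX0]; exact hpart t σ
    have e2 : HasDerivAt (fun ε => X t (X ε σ))
        (((D t σ).comp (ContinuousLinearMap.inr ℝ ℝ ((Fin n → ℝ) × (Fin n → ℝ)))) (Vt (X 0 σ))) 0 :=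
      hp.comp_hasDerivAt 0 (hXode' 0 σ)
    have := e2.unique e1
    rw [hX0] at this
    rw [← this]
    rfl
  -- conservation of energy
  have hconsv : ∀ s ∈ Set.Icc (0 : ℝ) T,
      v s ⬝ᵥ ((c (x s)) ^ 2 • g0 (x s)) *ᵥ v s = 1 :=
    consv n U hU g0 hg0 hg0sym hg0pos c hc hcpos Y hYanti T hT x v hxU hxode hvode hunit
  -- the difference of accelerations equals the bracket
  have hbracket : ∀ s ∈ Set.Icc (0 : ℝ) T, ∀ i : Fin n,
      a s i - (Vt (γ s)).2 i
        = 2 * v s i * (∑ j, fderiv ℝ (fun w => Real.log (ct w / c w)) (x s)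
              (Pi.single j 1) * v s j)
          - (c (x s) ^ 2)⁻¹ * ∑ j, (g0 (x s))⁻¹ i j
              * fderiv ℝ (fun w => Real.log (ct w / c w)) (x s) (Pi.single j 1)
          + ∑ j, (Y (x s) i j - Yt (x s) i j) * v s j := by
    intro s hs i
    have hz := hxU s hs
    have hg0v : v s ⬝ᵥ g0 (x s) *ᵥ v s = (c (x s) ^ 2)⁻¹ := by
      have h2 : v s ⬝ᵥ ((c (x s)) ^ 2 • g0 (x s)) *ᵥ v s
          = (v s ⬝ᵥ g0 (x s) *ᵥ v s) * (c (x s)) ^ 2 := by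
        rw [Matrix.smul_mulVec, dotProduct_smul]
        simp [mul_comm]
      exact eq_inv_of_mul_eq_one_left (by rw [← h2]; exact hconsv s hs)
    have hdiff := christoffel_diff_contract hU hg0 hg0pos hc hct hcpos hctpos hz i (v s)
    have hsplit : ∑ j, ∑ k, (christoffel (fun w => (ct w)^2 • g0 w) (x s) i j k
          - christoffel (fun w => (c w)^2 • g0 w) (x s) i j k) * v s j * v s k
        = (∑ j, ∑ k, christoffel (fun w => (ct w)^2 • g0 w) (x s) i j k * v s j * v s k)
          - (∑ j, ∑ k, christoffel (fun w => (c w)^2 • g0 w) (x s) i j k * v s j * v s k) := by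
      simp only [sub_mul, Finset.sum_sub_distrib]
    have hY : ∑ j, (Y (x s) i j - Yt (x s) i j) * v s j
        = (∑ j, Y (x s) i j * v s j) - ∑ j, Yt (x s) i j * v s j := by
      simp only [sub_mul, Finset.sum_sub_distrib]
    have hVt2 : (Vt (γ s)).2 i
        = -(∑ j, ∑ k, christoffel (fun w => (ct w) ^ 2 • g0 w) (x s) i j k
            * v s j * v s k) + ∑ j, Yt (x s) i j * v s j := rfl
    rw [hVt2, ha]
    simp only
    rw [hg0v] at hdiff
    rw [hY, ← hdiff, hsplit]
    ring
  -- interior derivatives of x and v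
  have hxv : ∀ s ∈ Set.Ioo (0 : ℝ) T, HasDerivAt x (v s) s ∧ HasDerivAt v (a s) s := by
    intro s hs
    have hmem : Set.Icc (0 : ℝ) T ∈ nhds s := Icc_mem_nhds hs.1 hs.2
    exact ⟨(hxode s (Set.Ioo_subset_Icc_self hs)).hasDerivAt hmem,
      (hvode s (Set.Ioo_subset_Icc_self hs)).hasDerivAt hmem⟩
  -- identification of the statement's weight
  have hfd : ∀ (s : ℝ), fderiv ℝ (fun σ : (Fin n → ℝ) × (Fin n → ℝ) => (X (T - s) σ).2 l) (γ s)
      = (π.comp ((D (T - s) (γ s)).comp (ContinuousLinearMap.inr ℝ ℝ ((Fin n → ℝ) × (Fin n → ℝ))))) := by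
    intro s
    exact (π.hasFDerivAt.comp (γ s) (hpart (T - s) (γ s))).fderiv
  have hweight : ∀ (s : ℝ) (i : Fin n),
      (fderiv ℝ (fun σ : (Fin n → ℝ) × (Fin n → ℝ) => (X (T - s) σ).2 l) (γ s))
          ((0 : Fin n → ℝ), Pi.single i 1)
        = π (D (T - s) (γ s) (0, ((0 : Fin n → ℝ), Pi.single i 1))) := by
    intro s i
    rw [hfd s]
    rfl
  -- the derivative of the transported fibre component
  have hFderiv : ∀ s ∈ Set.Ioo (0 : ℝ) T,
      HasDerivAt (fun τ => (X (T - τ) (γ τ)).2 l)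
        (∑ i, (fderiv ℝ (fun σ : (Fin n → ℝ) × (Fin n → ℝ) => (X (T - s) σ).2 l) (γ s))
            ((0 : Fin n → ℝ), Pi.single i 1)
          * (a s i - (Vt (γ s)).2 i)) s := by
    intro s hs
    obtain ⟨hx', hv'⟩ := hxv s hs
    have hq : HasDerivAt (fun τ => ((T - τ : ℝ), γ τ)) ((-1 : ℝ), (v s, a s)) s := by
      have h1 : HasDerivAt (fun τ : ℝ => T - τ) (-1) s := by
        simpa using (hasDerivAt_id s).const_sub T
      exact h1.prodMk (hx'.prodMk hv')
    have hcomp : HasDerivAt (fun τ => Xh (T - τ, γ τ))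
        (D (T - s) (γ s) (-1, (v s, a s))) s :=
      (hXdiff _).hasFDerivAt.comp_hasDerivAt s hq
    have hπcomp : HasDerivAt (fun τ => (X (T - τ) (γ τ)).2 l)
        (π (D (T - s) (γ s) (-1, (v s, a s)))) s :=
      π.hasFDerivAt.comp_hasDerivAt s hcomp
    have hval : π (D (T - s) (γ s) ((-1 : ℝ), (v s, a s)))
        = ∑ i, (fderiv ℝ (fun σ : (Fin n → ℝ) × (Fin n → ℝ) => (X (T - s) σ).2 l) (γ s))
            ((0 : Fin n → ℝ), Pi.single i 1) * (a s i - (Vt (γ s)).2 i) := by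
      have e0 : ((-1 : ℝ), (v s, a s)) = (((0 : ℝ), (v s, a s)) : ℝ × ((Fin n → ℝ) × (Fin n → ℝ)))
          - ((1 : ℝ), (0 : (Fin n → ℝ) × (Fin n → ℝ))) := by
        rw [Prod.ext_iff]; constructor
        · norm_num
        · simp
      rw [e0, map_sub, htime (T - s) (γ s), ← hcomm (T - s) (γ s), ← map_sub]
      have e1 : (((0 : ℝ), (v s, a s)) : ℝ × ((Fin n → ℝ) × (Fin n → ℝ))) - (0, Vt (γ s))
          = ((0 : ℝ), ((0 : Fin n → ℝ), fun i => a s i - (Vt (γ s)).2 i)) := by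
        rw [Prod.ext_iff]; constructor
        · norm_num
        · rw [Prod.ext_iff]; constructor
          · simp [hVt, hγ]
          · rfl
      rw [e1]
      have hl := clm_apply_eq_sum₂ (π.comp (D (T - s) (γ s)))
        (fun i => a s i - (Vt (γ s)).2 i)
      simp only [ContinuousLinearMap.comp_apply] at hl
      rw [hl]
      exact Finset.sum_congr rfl fun i _ => by rw [hweight s i]; exact mul_comm _ _
    rw [hval] at hπcomp
    exact hπcomp

  -- continuity of x and v
  have hxcont : ContinuousOn x (Set.Icc (0:ℝ) T) :=
    fun s hs => (hxode s hs).continuousWithinAt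
  have hvcont : ContinuousOn v (Set.Icc (0:ℝ) T) :=
    fun s hs => (hvode s hs).continuousWithinAt
  have hγcont : ContinuousOn γ (Set.Icc (0:ℝ) T) := hxcont.prodMk hvcont
  set F : ℝ → ℝ := fun τ => (X (T - τ) (γ τ)).2 l with hF
  have hFcont : ContinuousOn F (Set.Icc (0:ℝ) T) := by
    have h1 : ContinuousOn (fun τ => Xh (T - τ, γ τ)) (Set.Icc (0:ℝ) T) :=
      hXC1.continuous.comp_continuousOn
        (((continuous_const.sub continuous_id).continuousOn).prodMk hγcont)
    exact ((continuous_apply l).comp continuous_snd).comp_continuousOn h1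
  set B : ℝ → Fin n → ℝ := fun s i =>
      2 * v s i * (∑ j, fderiv ℝ (fun w => Real.log (ct w / c w)) (x s)
            (Pi.single j 1) * v s j)
        - (c (x s) ^ 2)⁻¹ * ∑ j, (g0 (x s))⁻¹ i j
            * fderiv ℝ (fun w => Real.log (ct w / c w)) (x s) (Pi.single j 1)
        + ∑ j, (Y (x s) i j - Yt (x s) i j) * v s j with hB
  have hdhcont : ∀ j : Fin n, ContinuousOn
      (fun s => fderiv ℝ (fun w => Real.log (ct w / c w)) (x s) (Pi.single j 1))
      (Set.Icc (0:ℝ) T) := by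
    intro j
    have hlog : ContDiffOn ℝ 1 (fun w => Real.log (ct w / c w)) U :=
      (hct.div hc (fun z hz => (hcpos z hz).ne')).log
        (fun z hz => (div_pos (hctpos z hz) (hcpos z hz)).ne')
    have h2 : ContinuousOn (fun z => fderiv ℝ (fun w => Real.log (ct w / c w)) z) U :=
      hlog.continuousOn_fderiv_of_isOpen hU le_rfl
    exact (h2.comp hxcont hxU).clm_apply continuousOn_const
  have hg0inv : ∀ i j : Fin n, ContinuousOn (fun s => (g0 (x s))⁻¹ i j)
      (Set.Icc (0:ℝ) T) := by
    intro i j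
    have hmat : ContinuousOn (fun z => g0 z) U := by
      rw [continuousOn_iff_continuous_restrict]
      exact continuous_matrix fun a b =>
        continuousOn_iff_continuous_restrict.mp (hg0 a b).continuousOn
    have hdet : ContinuousOn (fun z => (g0 z).det) U :=
      continuous_id.matrix_det.comp_continuousOn hmat
    have hadj : ContinuousOn (fun z => (g0 z).adjugate i j) U :=
      ((continuous_apply j).comp ((continuous_apply i).comp
        continuous_id.matrix_adjugate)).comp_continuousOn hmat
    have hinv : ContinuousOn (fun z => (g0 z)⁻¹ i j) U := by
      refine ContinuousOn.congr
        ((hdet.inv₀ (fun z hz => (hg0pos z hz).det_pos.ne')).mul hadj) ?_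
      intro z hz
      show (g0 z)⁻¹ i j = ((g0 z).det)⁻¹ * (g0 z).adjugate i j
      rw [Matrix.inv_def, Matrix.smul_apply, Ring.inverse_eq_inv', smul_eq_mul]
    exact hinv.comp hxcont hxU
  have hccont : ContinuousOn (fun s => c (x s)) (Set.Icc (0:ℝ) T) :=
    hc.continuousOn.comp hxcont hxU
  have hvc : ∀ i : Fin n, ContinuousOn (fun s => v s i) (Set.Icc (0:ℝ) T) :=
    fun i => (continuous_apply i).comp_continuousOn hvcont
  have hBcont : ∀ i : Fin n, ContinuousOn (fun s => B s i) (Set.Icc (0:ℝ) T) := by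
    intro i
    rw [hB]
    refine ContinuousOn.add (ContinuousOn.sub ?_ ?_) ?_
    · exact (continuousOn_const.mul (hvc i)).mul
        (continuousOn_finset_sum _ fun j _ => (hdhcont j).mul (hvc j))
    · exact ((hccont.pow 2).inv₀
          (fun s hs => pow_ne_zero 2 (hcpos _ (hxU s hs)).ne')).mul
        (continuousOn_finset_sum _ fun j _ => (hg0inv i j).mul (hdhcont j))
    · refine continuousOn_finset_sum _ fun j _ => ContinuousOn.mul ?_ (hvc j)
      exact ((hY i j).comp hxcont hxU).sub ((hYt i j).comp hxcont hxU)
  have hDcont : Continuous (fun p : ℝ × ((Fin n → ℝ) × (Fin n → ℝ)) => fderiv ℝ Xh p) :=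
    hXC1.continuous_fderiv one_ne_zero
  have hWcont : ∀ i : Fin n, ContinuousOn
      (fun s => π (D (T - s) (γ s) (0, ((0 : Fin n → ℝ), Pi.single i 1))))
      (Set.Icc (0:ℝ) T) := by
    intro i
    have h1 : ContinuousOn (fun s => D (T - s) (γ s)) (Set.Icc (0:ℝ) T) :=
      hDcont.comp_continuousOn
        (((continuous_const.sub continuous_id).continuousOn).prodMk hγcont)
    exact π.continuous.comp_continuousOn (h1.clm_apply continuousOn_const)
  set φ : ℝ → ℝ := fun s => ∑ i,
    π (D (T - s) (γ s) (0, ((0 : Fin n → ℝ), Pi.single i 1))) * B s i with hφ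
  have hφcont : ContinuousOn φ (Set.Icc (0:ℝ) T) := by
    rw [hφ]
    exact continuousOn_finset_sum _ fun i _ => (hWcont i).mul (hBcont i)
  have hFTC : ∫ s in (0:ℝ)..T, φ s = F T - F 0 := by
    refine intervalIntegral.integral_eq_sub_of_hasDeriv_right_of_le hT.le hFcont ?_ ?_
    · intro s hs
      have h := hFderiv s hs
      have heq : (∑ i, (fderiv ℝ (fun σ : (Fin n → ℝ) × (Fin n → ℝ) =>
            (X (T - s) σ).2 l) (γ s)) ((0 : Fin n → ℝ), Pi.single i 1)
          * (a s i - (Vt (γ s)).2 i)) = φ s := by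
        rw [hφ]
        simp only
        refine Finset.sum_congr rfl fun i _ => ?_
        rw [hweight s i, hbracket s (Set.Ioo_subset_Icc_self hs) i]
      rw [heq] at h
      exact h.hasDerivWithinAt
    · rw [← Set.uIcc_of_le hT.le] at hφcont
      exact hφcont.intervalIntegrable
  have hFT : F T = v T l := by
    rw [hF]
    simp only
    rw [sub_self, hX0, hγ]
  have hF0 : F 0 = v T l := by
    rw [hF]
    simp only
    rw [sub_zero, hγ]
    simp only
    rw [← hend]
  have hinteq : Set.EqOn (fun s => ∑ i,
      (fderiv ℝ (fun σ : (Fin n → ℝ) × (Fin n → ℝ) => (X (T - s) σ).2 l) (x s, v s))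
          ((0 : Fin n → ℝ), Pi.single i 1) *
        (2 * v s i * (∑ j, fderiv ℝ (fun w => Real.log (ct w / c w)) (x s)
              (Pi.single j 1) * v s j)
          - (c (x s) ^ 2)⁻¹ * ∑ j, (g0 (x s))⁻¹ i j
              * fderiv ℝ (fun w => Real.log (ct w / c w)) (x s) (Pi.single j 1)
          + ∑ j, (Y (x s) i j - Yt (x s) i j) * v s j)) φ (Set.uIcc (0:ℝ) T) := by
    intro s _
    rw [hφ]
    simp only
    refine Finset.sum_congr rfl fun i _ => ?_
    rw [hweight s i, hB]
  rw [intervalIntegral.integral_congr hinteq, hFTC, hFT, hF0, sub_self]
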